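/- Let f : [0,∞) → ℝ and g : [0,∞) → [0,∞) satisfy f(s) + f(t) − g(s+t) ≤ f(s+t) ≤ f(s) + f(t) + g(s+t) for all 0 ≤ s ≤ t ≤ 2s, and assume that σ := lim_{s→∞} f(s)/s exists and lies in (0,∞). Then for every s > 0 one has the quantitative bound |f(s)/s − σ| ≤ (1/s)·Σ_{n=0}^∞ g(2^{n+1} s)/2^{n+1}, where the series on the right-hand side is interpreted in [0, ∞]. -/

import Mathlib

open scoped ENNReal

/-- **Quantitative Pólya–Szegő-type rate.** Let `f : [0,∞) → ℝ` and
`g : [0,∞) → [0,∞)` satisfy `f(s) + f(t) - g(s+t) ≤ f(s+t) ≤ f(s) + f(t) + g(s+t)`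
for all `0 ≤ s ≤ t ≤ 2s`, and assume `σ := lim_{s→∞} f(s)/s` exists with
`σ ∈ (0,∞)`. Then for every `s > 0`,
`|f(s)/s - σ| ≤ (1/s) Σ_{n=0}^∞ g(2^{n+1} s)/2^{n+1}`, where the series is
interpreted in `[0,∞]`. -/
theorem polya_szego_rate (f g : ℝ → ℝ) (hg : ∀ z : ℝ, 0 ≤ z → 0 ≤ g z)
    (hbound : ∀ s t : ℝ, 0 ≤ s → s ≤ t → t ≤ 2 * s →
      f s + f t - g (s + t) ≤ f (s + t) ∧ f (s + t) ≤ f s + f t + g (s + t))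
    (σ : ℝ) (hσ : 0 < σ)
    (hlim : Filter.Tendsto (fun s : ℝ => f s / s) Filter.atTop (nhds σ)) :
    ∀ s : ℝ, 0 < s →
      ENNReal.ofReal |f s / s - σ| ≤
        ENNReal.ofReal (1 / s) *
          ∑' n : ℕ, ENNReal.ofReal (g (2 ^ (n + 1) * s) / 2 ^ (n + 1)) := by
  intro s hs
  -- doubling estimate
  have key : ∀ u : ℝ, 0 ≤ u → |f (2 * u) - 2 * f u| ≤ g (2 * u) := by
    intro u hu
    obtain ⟨h1, h2⟩ := hbound u u hu le_rfl (by linarith)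
    have e : u + u = 2 * u := by ring
    rw [e] at h1 h2
    rw [abs_le]
    constructor <;> linarith
  set b : ℕ → ℝ := fun n => g (2 ^ (n + 1) * s) / 2 ^ (n + 1) with hb
  have hbnn : ∀ n, 0 ≤ b n := fun n =>
    div_nonneg (hg _ (by positivity)) (by positivity)
  by_cases hS : (∑' n : ℕ, ENNReal.ofReal (b n)) = ⊤
  · rw [hS, ENNReal.mul_top]
    · exact le_top
    · simp [ENNReal.ofReal_eq_zero, not_le, hs]
  -- the real series is summable
  have hsumm : Summable b := by
    have := ENNReal.summable_toReal hS
    convert this using 1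
    ext n
    rw [ENNReal.toReal_ofReal (hbnn n)]
  set T : ℝ := ∑' n, b n with hT
  have hTnn : 0 ≤ T := tsum_nonneg hbnn
  -- the dyadic sequence
  set a : ℕ → ℝ := fun n => f (2 ^ n * s) / 2 ^ n with ha
  have hstep : ∀ n : ℕ, dist (a n) (a (n + 1)) ≤ b n := by
    intro n
    have h2 : (2 : ℝ) ^ (n + 1) * s = 2 * (2 ^ n * s) := by ring
    have hk := key (2 ^ n * s) (by positivity)
    rw [← h2] at hk
    have hpos : (0 : ℝ) < 2 ^ (n + 1) := by positivity
    rw [dist_comm, Real.dist_eq, ha, hb]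
    simp only
    have : f (2 ^ (n + 1) * s) / 2 ^ (n + 1) - f (2 ^ n * s) / 2 ^ n
        = (f (2 ^ (n + 1) * s) - 2 * f (2 ^ n * s)) / 2 ^ (n + 1) := by
      field_simp
      ring
    rw [this, abs_div, abs_of_pos hpos]
    exact div_le_div_of_nonneg_right hk hpos.le |>.trans_eq rfl
  -- telescoping bound
  have htel : ∀ N : ℕ, dist (a 0) (a N) ≤ T := by
    intro N
    calc dist (a 0) (a N) ≤ ∑ i ∈ Finset.range N, dist (a i) (a (i + 1)) :=
          dist_le_range_sum_dist a N
      _ ≤ ∑ i ∈ Finset.range N, b i := Finset.sum_le_sum fun i _ => hstep i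
      _ ≤ T := Summable.sum_le_tsum _ (fun i _ => hbnn i) hsumm
  -- limit of a
  have hpow : Filter.Tendsto (fun n : ℕ => (2 : ℝ) ^ n * s) Filter.atTop Filter.atTop :=
    (tendsto_pow_atTop_atTop_of_one_lt (by norm_num : (1:ℝ) < 2)).atTop_mul_const hs
  have hlim2 : Filter.Tendsto a Filter.atTop (nhds (σ * s)) := by
    have h1 : Filter.Tendsto (fun n : ℕ => f (2 ^ n * s) / (2 ^ n * s)) Filter.atTop (nhds σ) :=
      hlim.comp hpow
    have := h1.mul_const s
    convert this using 2 with n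
    rw [ha]
    field_simp
  have ha0 : a 0 = f s := by simp [ha]
  -- pass to the limit
  have hmain : |f s - σ * s| ≤ T := by
    have hd : Filter.Tendsto (fun N => dist (a 0) (a N)) Filter.atTop
        (nhds (dist (a 0) (σ * s))) :=
      (tendsto_const_nhds.dist hlim2)
    have := le_of_tendsto hd (Filter.Eventually.of_forall htel)
    rwa [ha0, Real.dist_eq] at this
  -- convert to the ENNReal statement
  have hreal : |f s / s - σ| ≤ (1 / s) * T := by
    have heq : f s / s - σ = (f s - σ * s) / s := by field_simp
    rw [heq, abs_div, abs_of_pos hs, one_div, inv_mul_eq_div]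
    exact (div_le_div_iff_of_pos_right hs).mpr hmain
  calc ENNReal.ofReal |f s / s - σ| ≤ ENNReal.ofReal ((1 / s) * T) :=
        ENNReal.ofReal_le_ofReal hreal
    _ = ENNReal.ofReal (1 / s) * ENNReal.ofReal T :=
        ENNReal.ofReal_mul (by positivity)
    _ = ENNReal.ofReal (1 / s) * ∑' n, ENNReal.ofReal (b n) := by
        rw [hT, ENNReal.ofReal_tsum_of_nonneg hbnn hsumm]
    _ = _ := rfl
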